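/- Let F be a field of characteristic different from 2. Then there do not exist 7 pairwise distinct lines in ℙ²(F) having 7 triple points. -/

import Mathlib

/-- The projective plane over `F` (also used, by duality, for the lines of that plane). -/
abbrev ProjPlane (F : Type*) [Field F] := Projectivization F (Fin 3 → F)

/-- The point `P` lies on the line `L` (a line is recorded by the projective class of the
coefficient vector of a defining linear form): the pairing of representatives vanishes.
This does not depend on the choice of representatives. -/
def OnLine {F : Type*} [Field F] (P L : ProjPlane F) : Prop :=
  dotProduct P.rep L.rep = 0

/-- The multiplicity of a point `P` with respect to a configuration `lines`:
the number of lines of the configuration passing through `P`. -/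
noncomputable def mult {F : Type*} [Field F] (lines : Set (ProjPlane F))
    (P : ProjPlane F) : ℕ :=
  {L ∈ lines | OnLine P L}.ncard

section Helpers

open Matrix Projectivization

variable {F : Type*} [Field F]

lemma smul_of_cross_eq_zero {x y : Fin 3 → F} (h : crossProduct x y = 0) (hy : y ≠ 0) :
    ∃ c : F, x = c • y := by
  have h0 := congrFun h 0
  have h1 := congrFun h 1
  have h2 := congrFun h 2
  simp [cross_apply, sub_eq_zero] at h0 h1 h2
  have hcase : y 0 ≠ 0 ∨ y 1 ≠ 0 ∨ y 2 ≠ 0 := by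
    by_contra hc
    push_neg at hc
    exact hy (by funext j; fin_cases j <;> simp [hc.1, hc.2.1, hc.2.2])
  rcases hcase with hy0 | hy1 | hy2
  · refine ⟨x 0 / y 0, funext fun j => ?_⟩
    have e0 : x 0 = x 0 / y 0 * y 0 := by field_simp
    have e1 : x 1 = x 0 / y 0 * y 1 := by field_simp; linear_combination -h2
    have e2 : x 2 = x 0 / y 0 * y 2 := by field_simp; linear_combination h1
    fin_cases j <;> first | exact e0 | exact e1 | exact e2
  · refine ⟨x 1 / y 1, funext fun j => ?_⟩
    have e0 : x 0 = x 1 / y 1 * y 0 := by field_simp; linear_combination h2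
    have e1 : x 1 = x 1 / y 1 * y 1 := by field_simp
    have e2 : x 2 = x 1 / y 1 * y 2 := by field_simp; linear_combination -h0
    fin_cases j <;> first | exact e0 | exact e1 | exact e2
  · refine ⟨x 2 / y 2, funext fun j => ?_⟩
    have e0 : x 0 = x 2 / y 2 * y 0 := by field_simp; linear_combination -h1
    have e1 : x 1 = x 2 / y 2 * y 1 := by field_simp; linear_combination h0
    have e2 : x 2 = x 2 / y 2 * y 2 := by field_simp
    fin_cases j <;> first | exact e0 | exact e1 | exact e2

lemma quad {F : Type*} [Field F] (a b c x : Fin 3 → F) :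
    (a ⬝ᵥ crossProduct b c) • x =
      (x ⬝ᵥ crossProduct b c) • a + (x ⬝ᵥ crossProduct c a) • b + (x ⬝ᵥ crossProduct a b) • c := by
  funext i
  fin_cases i <;>
    simp [cross_apply, dotProduct, Fin.sum_univ_three] <;> ring

lemma bac_cab (x a b : Fin 3 → F) :
    crossProduct x (crossProduct a b) = (x ⬝ᵥ b) • a - (x ⬝ᵥ a) • b := by
  funext i
  fin_cases i <;> simp [cross_apply, dotProduct, Fin.sum_univ_three] <;> ring

lemma eq_of_rep_smul {P Q : ProjPlane F} {c : F} (h : P.rep = c • Q.rep) : P = Q := by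
  rw [← mk_rep P, ← mk_rep Q, mk_eq_mk_iff']
  exact ⟨c, h.symm⟩

lemma cross_rep_ne_zero {P Q : ProjPlane F} (h : P ≠ Q) :
    crossProduct P.rep Q.rep ≠ 0 := by
  intro hc
  rcases smul_of_cross_eq_zero hc Q.rep_nonzero with ⟨c, hcs⟩
  exact h (eq_of_rep_smul hcs)

lemma eq_smul_cross {a b l : Fin 3 → F} (hab : crossProduct a b ≠ 0)
    (ha : a ⬝ᵥ l = 0) (hb : b ⬝ᵥ l = 0) : ∃ c : F, l = c • crossProduct a b := by
  apply smul_of_cross_eq_zero _ hab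
  rw [bac_cab, dotProduct_comm l b, dotProduct_comm l a, ha, hb]
  simp

lemma line_unique {P Q L M : ProjPlane F} (hPQ : P ≠ Q) (h1 : OnLine P L)
    (h2 : OnLine Q L) (h3 : OnLine P M) (h4 : OnLine Q M) : L = M := by
  have hn := cross_rep_ne_zero hPQ
  rcases eq_smul_cross hn h1 h2 with ⟨c, hc⟩
  rcases eq_smul_cross hn h3 h4 with ⟨d, hd⟩
  have hd0 : d ≠ 0 := by rintro rfl; exact M.rep_nonzero (by simpa using hd)
  exact eq_of_rep_smul (c := c * d⁻¹) (by rw [hc, hd, smul_smul, mul_assoc, inv_mul_cancel₀ hd0, mul_one])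

lemma point_unique {P Q L M : ProjPlane F} (hLM : L ≠ M) (h1 : OnLine P L)
    (h2 : OnLine P M) (h3 : OnLine Q L) (h4 : OnLine Q M) : P = Q := by
  have hn := cross_rep_ne_zero hLM
  have c1 : L.rep ⬝ᵥ P.rep = 0 := by rw [dotProduct_comm]; exact h1
  have c2 : M.rep ⬝ᵥ P.rep = 0 := by rw [dotProduct_comm]; exact h2
  have c3 : L.rep ⬝ᵥ Q.rep = 0 := by rw [dotProduct_comm]; exact h3
  have c4 : M.rep ⬝ᵥ Q.rep = 0 := by rw [dotProduct_comm]; exact h4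
  rcases eq_smul_cross hn c1 c2 with ⟨c, hc⟩
  rcases eq_smul_cross hn c3 c4 with ⟨d, hd⟩
  have hd0 : d ≠ 0 := by rintro rfl; exact Q.rep_nonzero (by simpa using hd)
  exact eq_of_rep_smul (c := c * d⁻¹) (by rw [hc, hd, smul_smul, mul_assoc, inv_mul_cancel₀ hd0, mul_one])

lemma onLine_mk_right {P : ProjPlane F} {v : Fin 3 → F} (hv : v ≠ 0) :
    OnLine P (Projectivization.mk F v hv) ↔ P.rep ⬝ᵥ v = 0 := by
  rcases exists_smul_eq_mk_rep F v hv with ⟨a, ha⟩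
  unfold OnLine
  rw [← ha, dotProduct_smul, Units.smul_def, smul_eq_mul]
  simp [Units.ne_zero]

lemma onLine_mk_left {L : ProjPlane F} {v : Fin 3 → F} (hv : v ≠ 0) :
    OnLine (Projectivization.mk F v hv) L ↔ v ⬝ᵥ L.rep = 0 := by
  rcases exists_smul_eq_mk_rep F v hv with ⟨a, ha⟩
  unfold OnLine
  rw [← ha, smul_dotProduct, Units.smul_def, smul_eq_mul]
  simp [Units.ne_zero]

lemma exists_point_on_two_lines {L M : ProjPlane F} (h : L ≠ M) :
    ∃ P : ProjPlane F, OnLine P L ∧ OnLine P M := by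
  have hn := cross_rep_ne_zero h
  refine ⟨Projectivization.mk F (crossProduct L.rep M.rep) hn, ?_, ?_⟩ <;>
    rw [onLine_mk_left] <;> rw [dotProduct_comm]
  · exact dot_self_cross _ _
  · exact dot_cross_self _ _

lemma dcl (x u v w : Fin 3 → F) (a b : F) :
    x ⬝ᵥ crossProduct (a • u + b • v) w
      = a * (x ⬝ᵥ crossProduct u w) + b * (x ⬝ᵥ crossProduct v w) := by
  simp [map_add, _root_.map_smul, LinearMap.add_apply, LinearMap.smul_apply, dotProduct_add,
    dotProduct_smul, smul_eq_mul]

lemma dcr (x w u v : Fin 3 → F) (a b : F) :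
    x ⬝ᵥ crossProduct w (a • u + b • v)
      = a * (x ⬝ᵥ crossProduct w u) + b * (x ⬝ᵥ crossProduct w v) := by
  simp [map_add, _root_.map_smul, dotProduct_add, dotProduct_smul, smul_eq_mul]

lemma dclS (x u w : Fin 3 → F) (a : F) :
    x ⬝ᵥ crossProduct (a • u) w = a * (x ⬝ᵥ crossProduct u w) := by
  simp [_root_.map_smul, LinearMap.smul_apply, dotProduct_smul, smul_eq_mul]

lemma dcrS (x w u : Fin 3 → F) (a : F) :
    x ⬝ᵥ crossProduct w (a • u) = a * (x ⬝ᵥ crossProduct w u) := by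
  simp [_root_.map_smul, dotProduct_smul, smul_eq_mul]

lemma anti (x u v : Fin 3 → F) :
    x ⬝ᵥ crossProduct u v = -(x ⬝ᵥ crossProduct v u) := by
  rw [← cross_anticomm v u, dotProduct_neg]

/-- The algebraic core: seven points realizing the Fano incidences force `2 = 0`. -/
lemma alg (hchar : ringChar F ≠ 2) (p1 p2 p3 p4 p5 p6 p7 : ProjPlane F)
    (h12 : p1 ≠ p2) (h13 : p1 ≠ p3) (h14 : p1 ≠ p4) (h15 : p1 ≠ p5) (h16 : p1 ≠ p6)
    (h23 : p2 ≠ p3) (h24 : p2 ≠ p4) (h25 : p2 ≠ p5) (h26 : p2 ≠ p6)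
    (h34 : p3 ≠ p4) (h45 : p4 ≠ p5) (h46 : p4 ≠ p6) (h56 : p5 ≠ p6)
    (c123 : ∃ l : Fin 3 → F, l ≠ 0 ∧ p1.rep ⬝ᵥ l = 0 ∧ p2.rep ⬝ᵥ l = 0 ∧ p3.rep ⬝ᵥ l = 0)
    (c145 : ∃ l : Fin 3 → F, l ≠ 0 ∧ p1.rep ⬝ᵥ l = 0 ∧ p4.rep ⬝ᵥ l = 0 ∧ p5.rep ⬝ᵥ l = 0)
    (c167 : ∃ l : Fin 3 → F, l ≠ 0 ∧ p1.rep ⬝ᵥ l = 0 ∧ p6.rep ⬝ᵥ l = 0 ∧ p7.rep ⬝ᵥ l = 0)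
    (c246 : ∃ l : Fin 3 → F, l ≠ 0 ∧ p2.rep ⬝ᵥ l = 0 ∧ p4.rep ⬝ᵥ l = 0 ∧ p6.rep ⬝ᵥ l = 0)
    (c257 : ∃ l : Fin 3 → F, l ≠ 0 ∧ p2.rep ⬝ᵥ l = 0 ∧ p5.rep ⬝ᵥ l = 0 ∧ p7.rep ⬝ᵥ l = 0)
    (c347 : ∃ l : Fin 3 → F, l ≠ 0 ∧ p3.rep ⬝ᵥ l = 0 ∧ p4.rep ⬝ᵥ l = 0 ∧ p7.rep ⬝ᵥ l = 0)
    (c356 : ∃ l : Fin 3 → F, l ≠ 0 ∧ p3.rep ⬝ᵥ l = 0 ∧ p5.rep ⬝ᵥ l = 0 ∧ p6.rep ⬝ᵥ l = 0)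
    (hncol : ∀ l : Fin 3 → F, l ≠ 0 →
      ¬(p1.rep ⬝ᵥ l = 0 ∧ p2.rep ⬝ᵥ l = 0 ∧ p4.rep ⬝ᵥ l = 0)) : False := by
  classical
  -- bracket vanishing from collinearity
  have bracket : ∀ (P Q R : ProjPlane F), P ≠ Q →
      (∃ l : Fin 3 → F, l ≠ 0 ∧ P.rep ⬝ᵥ l = 0 ∧ Q.rep ⬝ᵥ l = 0 ∧ R.rep ⬝ᵥ l = 0) →
      R.rep ⬝ᵥ crossProduct P.rep Q.rep = 0 := by
    rintro P Q R hPQ ⟨l, hl0, hP, hQ, hR⟩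
    rcases eq_smul_cross (cross_rep_ne_zero hPQ) hP hQ with ⟨c, hc⟩
    have hc0 : c ≠ 0 := by rintro rfl; rw [zero_smul] at hc; exact hl0 hc
    have := hR
    rw [hc, dotProduct_smul, smul_eq_mul, mul_eq_zero] at this
    exact this.resolve_left hc0
  have B123 : p3.rep ⬝ᵥ crossProduct p1.rep p2.rep = 0 := bracket _ _ _ h12 c123
  have B145 : p5.rep ⬝ᵥ crossProduct p1.rep p4.rep = 0 := bracket _ _ _ h14 c145
  have B167 : p7.rep ⬝ᵥ crossProduct p1.rep p6.rep = 0 := bracket _ _ _ h16 c167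
  have B246 : p6.rep ⬝ᵥ crossProduct p2.rep p4.rep = 0 := bracket _ _ _ h24 c246
  have B257 : p7.rep ⬝ᵥ crossProduct p2.rep p5.rep = 0 := bracket _ _ _ h25 c257
  have B347 : p7.rep ⬝ᵥ crossProduct p3.rep p4.rep = 0 := bracket _ _ _ h34 c347
  have B356 : p3.rep ⬝ᵥ crossProduct p5.rep p6.rep = 0 := by
    obtain ⟨l, hl0, h3, h5, h6⟩ := c356
    exact bracket _ _ _ h56 ⟨l, hl0, h5, h6, h3⟩
  -- the determinant of the frame
  have hD : p1.rep ⬝ᵥ crossProduct p2.rep p4.rep ≠ 0 := by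
    intro h0
    exact hncol (crossProduct p2.rep p4.rep) (cross_rep_ne_zero h24)
      ⟨h0, dot_self_cross _ _, dot_cross_self _ _⟩
  -- basis decompositions
  have hv3 := quad p1.rep p2.rep p4.rep p3.rep
  rw [B123, zero_smul, add_zero] at hv3
  have hv5 := quad p1.rep p2.rep p4.rep p5.rep
  have hB145' : p5.rep ⬝ᵥ crossProduct p4.rep p1.rep = 0 := by
    rw [anti, B145, neg_zero]
  rw [hB145', zero_smul, add_zero] at hv5
  have hv6 := quad p1.rep p2.rep p4.rep p6.rep
  rw [B246, zero_smul, zero_add] at hv6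
  have hv7 := quad p1.rep p2.rep p4.rep p7.rep
  -- names
  set D := p1.rep ⬝ᵥ crossProduct p2.rep p4.rep with hDdef
  set α := p3.rep ⬝ᵥ crossProduct p2.rep p4.rep with hαdef
  set β := p3.rep ⬝ᵥ crossProduct p4.rep p1.rep with hβdef
  set γ := p5.rep ⬝ᵥ crossProduct p2.rep p4.rep with hγdef
  set δ := p5.rep ⬝ᵥ crossProduct p1.rep p2.rep with hδdef
  set ε := p6.rep ⬝ᵥ crossProduct p4.rep p1.rep with hεdef
  set ζ := p6.rep ⬝ᵥ crossProduct p1.rep p2.rep with hζdef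
  set X := p7.rep ⬝ᵥ crossProduct p2.rep p4.rep with hXdef
  set Y := p7.rep ⬝ᵥ crossProduct p4.rep p1.rep with hYdef
  set Z := p7.rep ⬝ᵥ crossProduct p1.rep p2.rep with hZdef
  -- nonzero coefficients
  have collapse : ∀ (P Q : ProjPlane F) (a b : F), a ≠ 0 → a • P.rep = b • Q.rep → P = Q := by
    intro P Q a b ha h
    refine eq_of_rep_smul (c := a⁻¹ * b) ?_
    rw [mul_smul, ← h, smul_smul, inv_mul_cancel₀ ha, one_smul]
  have hβ : β ≠ 0 := fun h0 => h13 (collapse p3 p1 D α hD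
    (by rw [hv3, h0, zero_smul, add_zero])).symm
  have hα : α ≠ 0 := fun h0 => h23 (collapse p3 p2 D β hD
    (by rw [hv3, h0, zero_smul, zero_add])).symm
  have hγ : γ ≠ 0 := fun h0 => h45 (collapse p5 p4 D δ hD
    (by rw [hv5, h0, zero_smul, zero_add])).symm
  have hδ : δ ≠ 0 := fun h0 => h15 (collapse p5 p1 D γ hD
    (by rw [hv5, h0, zero_smul, add_zero])).symm
  have hε : ε ≠ 0 := fun h0 => h46 (collapse p6 p4 D ζ hD
    (by rw [hv6, h0, zero_smul, zero_add])).symm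
  have hζ : ζ ≠ 0 := fun h0 => h26 (collapse p6 p2 D ε hD
    (by rw [hv6, h0, zero_smul, add_zero])).symm
  -- scalar equations
  have e1 : β * X = α * Y := by
    have t : p7.rep ⬝ᵥ crossProduct (α • p1.rep + β • p2.rep) p4.rep = 0 := by
      rw [← hv3, dclS, B347, mul_zero]
    rw [dcl] at t
    have h14' : p7.rep ⬝ᵥ crossProduct p1.rep p4.rep = -Y := by rw [anti]
    rw [h14'] at t
    linear_combination t
  have e2 : δ * X = γ * Z := by
    have t : p7.rep ⬝ᵥ crossProduct p2.rep (γ • p1.rep + δ • p4.rep) = 0 := by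
      rw [← hv5, dcrS, B257, mul_zero]
    rw [dcr] at t
    have h21' : p7.rep ⬝ᵥ crossProduct p2.rep p1.rep = -Z := by rw [anti]
    rw [h21'] at t
    linear_combination t
  have e3 : ε * Z = ζ * Y := by
    have t : p7.rep ⬝ᵥ crossProduct p1.rep (ε • p2.rep + ζ • p4.rep) = 0 := by
      rw [← hv6, dcrS, B167, mul_zero]
    rw [dcr] at t
    have h14' : p7.rep ⬝ᵥ crossProduct p1.rep p4.rep = -Y := by rw [anti]
    rw [h14'] at t
    linear_combination t
  have e4 : α * δ * ε + β * γ * ζ = 0 := by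
    have t : p3.rep ⬝ᵥ crossProduct (γ • p1.rep + δ • p4.rep) (ε • p2.rep + ζ • p4.rep) = 0 := by
      rw [← hv5, ← hv6, dclS, dcrS, B356, mul_zero, mul_zero]
    rw [dcl, dcr, dcr] at t
    have q1 : p3.rep ⬝ᵥ crossProduct p1.rep p2.rep = 0 := B123
    have q2 : p3.rep ⬝ᵥ crossProduct p1.rep p4.rep = -β := by rw [anti]
    have q3 : p3.rep ⬝ᵥ crossProduct p4.rep p2.rep = -α := by
      rw [anti]
    have q4 : crossProduct p4.rep p4.rep = 0 := cross_self _
    rw [q1, q2, q3, q4, dotProduct_zero] at t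
    linear_combination -t
  -- Z ≠ 0
  have hZ : Z ≠ 0 := by
    intro h0
    have hX : X = 0 := by
      have := e2; rw [h0, mul_zero] at this
      exact (mul_eq_zero.mp this).resolve_left hδ
    have hY : Y = 0 := by
      have := e3; rw [h0, mul_zero] at this
      exact (mul_eq_zero.mp this.symm).resolve_left hζ
    rw [hX, hY, h0, zero_smul, zero_smul, zero_smul, add_zero, add_zero] at hv7
    exact p7.rep_nonzero ((smul_eq_zero.mp hv7).resolve_left hD)
  -- the final contradiction
  have h1' : β * ζ * X = α * ε * Z := by linear_combination ζ * e1 - α * e3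
  have hG : β * ζ * (δ ^ 2 * X ^ 2 + γ ^ 2 * Z ^ 2) = 0 := by
    linear_combination δ ^ 2 * X * h1' + α * ε * δ * Z * e2 + γ * Z ^ 2 * e4
  have hsum : δ ^ 2 * X ^ 2 + γ ^ 2 * Z ^ 2 = 0 :=
    (mul_eq_zero.mp hG).resolve_left (mul_ne_zero hβ hζ)
  have h2 : (2 : F) * (γ * Z) ^ 2 = 0 := by
    linear_combination hsum - (γ * Z + δ * X) * e2
  exact absurd h2 (mul_ne_zero (Ring.two_ne_zero hchar)
    (pow_ne_zero 2 (mul_ne_zero hγ hZ)))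

lemma fano_tail (hchar : ringChar F ≠ 2) (T : Finset (ProjPlane F))
    (thd : ProjPlane F → ProjPlane F → ProjPlane F)
    (hmem : ∀ P Q, P ∈ T → Q ∈ T → P ≠ Q → thd P Q ∈ T ∧ thd P Q ≠ P ∧ thd P Q ≠ Q)
    (hsym : ∀ P Q, P ∈ T → Q ∈ T → P ≠ Q → thd P Q = thd Q P)
    (hinv : ∀ P Q, P ∈ T → Q ∈ T → P ≠ Q → thd P (thd P Q) = Q)
    (hcol : ∀ P Q, P ∈ T → Q ∈ T → P ≠ Q →
      ∃ l : Fin 3 → F, l ≠ 0 ∧ P.rep ⬝ᵥ l = 0 ∧ Q.rep ⬝ᵥ l = 0 ∧ (thd P Q).rep ⬝ᵥ l = 0)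
    (p1 p2 p3 p4 p5 p6 p7 : ProjPlane F)
    (hp1 : p1 ∈ T) (hp2 : p2 ∈ T) (hp3 : p3 ∈ T) (hp4 : p4 ∈ T) (hp5 : p5 ∈ T)
    (hp6 : p6 ∈ T) (hp7 : p7 ∈ T)
    (d12 : p1 ≠ p2) (d13 : p1 ≠ p3) (d14 : p1 ≠ p4) (d15 : p1 ≠ p5) (d16 : p1 ≠ p6)
    (d17 : p1 ≠ p7) (d23 : p2 ≠ p3) (d24 : p2 ≠ p4) (d25 : p2 ≠ p5) (d26 : p2 ≠ p6)
    (d27 : p2 ≠ p7) (d34 : p3 ≠ p4) (d35 : p3 ≠ p5) (d36 : p3 ≠ p6) (d37 : p3 ≠ p7)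
    (d45 : p4 ≠ p5) (d46 : p4 ≠ p6) (d47 : p4 ≠ p7) (d56 : p5 ≠ p6) (d57 : p5 ≠ p7)
    (d67 : p6 ≠ p7)
    (henum : ∀ Q ∈ T, Q = p1 ∨ Q = p2 ∨ Q = p3 ∨ Q = p4 ∨ Q = p5 ∨ Q = p6 ∨ Q = p7)
    (t12 : thd p1 p2 = p3) (t14 : thd p1 p4 = p5) (t16 : thd p1 p6 = p7)
    (t24 : thd p2 p4 = p6)
    (hncol : ∀ l : Fin 3 → F, l ≠ 0 →
      ¬(p1.rep ⬝ᵥ l = 0 ∧ p2.rep ⬝ᵥ l = 0 ∧ p4.rep ⬝ᵥ l = 0)) : False := by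
  have third : ∀ P Q R, P ∈ T → Q ∈ T → P ≠ Q → thd P Q = R →
      thd P R = Q ∧ thd Q R = P := by
    intro P Q R hP hQ hne h
    refine ⟨?_, ?_⟩
    · rw [← h]; exact hinv P Q hP hQ hne
    · rw [← h, hsym P Q hP hQ hne]; exact hinv Q P hQ hP hne.symm
  obtain ⟨f13, f23⟩ := third p1 p2 p3 hp1 hp2 d12 t12
  obtain ⟨f15, f45⟩ := third p1 p4 p5 hp1 hp4 d14 t14
  obtain ⟨f17, f67⟩ := third p1 p6 p7 hp1 hp6 d16 t16
  obtain ⟨f26, f46⟩ := third p2 p4 p6 hp2 hp4 d24 t24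
  have f21 : thd p2 p1 = p3 := by rw [← hsym p1 p2 hp1 hp2 d12]; exact t12
  have f31 : thd p3 p1 = p2 := by rw [← hsym p1 p3 hp1 hp3 d13]; exact f13
  have f32 : thd p3 p2 = p1 := by rw [← hsym p2 p3 hp2 hp3 d23]; exact f23
  have f54 : thd p5 p4 = p1 := by rw [← hsym p4 p5 hp4 hp5 d45]; exact f45
  -- thd p2 p5 = p7
  have f25 : thd p2 p5 = p7 := by
    obtain ⟨hw, hw2, hw5⟩ := hmem p2 p5 hp2 hp5 d25
    have g := hinv p2 p5 hp2 hp5 d25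
    rcases henum _ hw with h|h|h|h|h|h|h
    · rw [h] at g; exact absurd (f21.symm.trans g) d35
    · exact absurd h hw2
    · rw [h] at g; exact absurd (f23.symm.trans g) d15
    · rw [h] at g; exact absurd (g.symm.trans t24) d56
    · exact absurd h hw5
    · rw [h] at g; exact absurd (f26.symm.trans g) d45
    · exact h
  -- thd p3 p4 = p7
  have f34 : thd p3 p4 = p7 := by
    obtain ⟨hw, hw3, hw4⟩ := hmem p3 p4 hp3 hp4 d34
    have g := hinv p3 p4 hp3 hp4 d34
    rcases henum _ hw with h|h|h|h|h|h|h
    · rw [h] at g; exact absurd (f31.symm.trans g) d24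
    · rw [h] at g; exact absurd (f32.symm.trans g) d14
    · exact absurd h hw3
    · exact absurd h hw4
    · have := (third p3 p4 p5 hp3 hp4 d34 h).2
      exact absurd (f45.symm.trans this) d13
    · have := (third p3 p4 p6 hp3 hp4 d34 h).2
      exact absurd (f46.symm.trans this) d23
    · exact h
  obtain ⟨f37, f47⟩ := third p3 p4 p7 hp3 hp4 d34 f34
  -- thd p3 p5 = p6
  have f35 : thd p3 p5 = p6 := by
    obtain ⟨hw, hw3, hw5⟩ := hmem p3 p5 hp3 hp5 d35
    have g := hinv p3 p5 hp3 hp5 d35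
    rcases henum _ hw with h|h|h|h|h|h|h
    · rw [h] at g; exact absurd (f31.symm.trans g) d25
    · rw [h] at g; exact absurd (f32.symm.trans g) d15
    · exact absurd h hw3
    · have := (third p3 p5 p4 hp3 hp5 d35 h).2
      exact absurd (f54.symm.trans this) d13
    · exact absurd h hw5
    · exact h
    · rw [h] at g; exact absurd (f37.symm.trans g) d45
  -- collinearity data
  have c123 := hcol p1 p2 hp1 hp2 d12; rw [t12] at c123
  have c145 := hcol p1 p4 hp1 hp4 d14; rw [t14] at c145
  have c167 := hcol p1 p6 hp1 hp6 d16; rw [t16] at c167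
  have c246 := hcol p2 p4 hp2 hp4 d24; rw [t24] at c246
  have c257 := hcol p2 p5 hp2 hp5 d25; rw [f25] at c257
  have c347 := hcol p3 p4 hp3 hp4 d34; rw [f34] at c347
  have c356 := hcol p3 p5 hp3 hp5 d35; rw [f35] at c356
  exact alg hchar p1 p2 p3 p4 p5 p6 p7 d12 d13 d14 d15 d16 d23 d24 d25 d26 d34 d45 d46 d56
    c123 c145 c167 c246 c257 c347 c356 hncol

end Helpers

open Matrix Projectivization in
set_option maxHeartbeats 2000000 in
theorem no_seven_lines_seven_triple_points (F : Type*) [Field F] (hchar : ringChar F ≠ 2) :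
    ¬ ∃ lines : Set (ProjPlane F),
        lines.ncard = 7 ∧
        {P : ProjPlane F | mult lines P = 3}.ncard = 7 := by
  classical
  rintro ⟨lines, hL7, hT7⟩
  have hLfin : lines.Finite := Set.finite_of_ncard_ne_zero (by omega)
  have hTfin : {P : ProjPlane F | mult lines P = 3}.Finite :=
    Set.finite_of_ncard_ne_zero (by omega)
  set LS : Finset (ProjPlane F) := hLfin.toFinset with hLSdef
  set TS : Finset (ProjPlane F) := hTfin.toFinset with hTSdef
  have hLS : LS.card = 7 := by
    rw [hLSdef, ← Set.ncard_eq_toFinset_card _ hLfin]; exact hL7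
  have hTS : TS.card = 7 := by
    rw [hTSdef, ← Set.ncard_eq_toFinset_card _ hTfin]; exact hT7
  have hmult : ∀ P : ProjPlane F, mult lines P = (LS.filter fun L => OnLine P L).card := by
    intro P
    have hset : {L ∈ lines | OnLine P L} = ↑(LS.filter fun L => OnLine P L) := by
      ext L
      simp [hLSdef, Set.Finite.mem_toFinset]
    unfold mult
    rw [hset, Set.ncard_coe_finset]
  have hmemTS : ∀ P : ProjPlane F, P ∈ TS ↔ (LS.filter fun L => OnLine P L).card = 3 := by
    intro P
    rw [hTSdef, Set.Finite.mem_toFinset, Set.mem_setOf_eq, hmult]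
  -- Claim 2 : two distinct configuration lines meet at a triple point
  have claim2 : ∀ L M : ProjPlane F, L ∈ LS → M ∈ LS → L ≠ M →
      ∃ P ∈ TS, OnLine P L ∧ OnLine P M := by
    intro L M hL hM hLM
    set fib : ProjPlane F → Finset (ProjPlane F × ProjPlane F) :=
      fun P => (LS.filter fun K => OnLine P K).offDiag with hfibdef
    have hdis : ∀ P ∈ TS, ∀ Q ∈ TS, P ≠ Q → Disjoint (fib P) (fib Q) := by
      intro P _ Q _ hPQ
      rw [Finset.disjoint_left]
      rintro ⟨K1, K2⟩ h1 h2
      rw [hfibdef, Finset.mem_offDiag] at h1 h2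
      obtain ⟨hK1, hK2, hKne⟩ := h1
      obtain ⟨hK1', hK2', -⟩ := h2
      exact hKne (line_unique hPQ (Finset.mem_filter.mp hK1).2 (Finset.mem_filter.mp hK1').2
        (Finset.mem_filter.mp hK2).2 (Finset.mem_filter.mp hK2').2)
    have hsub : TS.biUnion fib ⊆ LS.offDiag := by
      intro z hz
      rcases Finset.mem_biUnion.mp hz with ⟨P, -, hzP⟩
      rw [hfibdef, Finset.mem_offDiag] at hzP
      exact Finset.mem_offDiag.mpr ⟨(Finset.mem_filter.mp hzP.1).1,
        (Finset.mem_filter.mp hzP.2.1).1, hzP.2.2⟩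
    have hcard : (TS.biUnion fib).card = 42 := by
      rw [Finset.card_biUnion hdis]
      have he : ∀ P ∈ TS, (fib P).card = 6 := by
        intro P hP
        rw [hfibdef, Finset.offDiag_card, (hmemTS P).1 hP]
      rw [Finset.sum_congr rfl he, Finset.sum_const, hTS]
      norm_num
    have heq : TS.biUnion fib = LS.offDiag :=
      Finset.eq_of_subset_of_card_le hsub
        (by rw [hcard, Finset.offDiag_card, hLS])
    have hz : (L, M) ∈ LS.offDiag := Finset.mem_offDiag.mpr ⟨hL, hM, hLM⟩
    rw [← heq] at hz
    rcases Finset.mem_biUnion.mp hz with ⟨P, hP, hPf⟩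
    rw [hfibdef, Finset.mem_offDiag] at hPf
    exact ⟨P, hP, (Finset.mem_filter.mp hPf.1).2, (Finset.mem_filter.mp hPf.2.1).2⟩
  -- Claim 3 : every configuration line contains exactly three triple points
  have hsum : (∑ L ∈ LS, (TS.filter fun P => OnLine P L).card) = 21 := by
    have hswap : (∑ L ∈ LS, (TS.filter fun P => OnLine P L).card)
        = ∑ P ∈ TS, (LS.filter fun L => OnLine P L).card := by
      simp only [Finset.card_filter]
      rw [Finset.sum_comm]
    rw [hswap, Finset.sum_congr rfl (fun P hP => (hmemTS P).1 hP), Finset.sum_const, hTS]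
    norm_num
  have hlow : ∀ L ∈ LS, 3 ≤ (TS.filter fun P => OnLine P L).card := by
    intro L hL
    have : Nonempty (ProjPlane F) := ⟨L⟩
    have hch : ∀ M : ProjPlane F, ∃ P : ProjPlane F, M ∈ LS.erase L →
        P ∈ TS.filter (fun P => OnLine P L) ∧ OnLine P M := by
      intro M
      by_cases hM : M ∈ LS.erase L
      · obtain ⟨hMne, hMLS⟩ := Finset.mem_erase.mp hM
        obtain ⟨P, hP, hPL, hPM⟩ := claim2 L M hL hMLS (Ne.symm hMne)
        exact ⟨P, fun _ => ⟨Finset.mem_filter.mpr ⟨hP, hPL⟩, hPM⟩⟩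
      · exact ⟨Classical.arbitrary _, fun h => absurd h hM⟩
    choose f hf using hch
    have himg : (LS.erase L).image f ⊆ TS.filter fun P => OnLine P L := by
      intro P hP
      rcases Finset.mem_image.mp hP with ⟨M, hM, rfl⟩
      exact (hf M hM).1
    have hbound : ∀ P ∈ (LS.erase L).image f,
        ((LS.erase L).filter fun M => f M = P).card ≤ 2 := by
      intro P hPim
      have hPmem := Finset.mem_filter.mp (himg hPim)
      have hsubf : ((LS.erase L).filter fun M => f M = P)
          ⊆ (LS.filter fun K => OnLine P K).erase L := by
        intro M hM
        obtain ⟨hMe, hfM⟩ := Finset.mem_filter.mp hM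
        obtain ⟨hMne, hMLS⟩ := Finset.mem_erase.mp hMe
        refine Finset.mem_erase.mpr ⟨hMne, Finset.mem_filter.mpr ⟨hMLS, ?_⟩⟩
        rw [← hfM]
        exact (hf M hMe).2
      have h3 : (LS.filter fun K => OnLine P K).card = 3 := (hmemTS P).1 hPmem.1
      have hLmem : L ∈ LS.filter fun K => OnLine P K :=
        Finset.mem_filter.mpr ⟨hL, hPmem.2⟩
      calc ((LS.erase L).filter fun M => f M = P).card
          ≤ ((LS.filter fun K => OnLine P K).erase L).card := Finset.card_le_card hsubf
        _ = 2 := by rw [Finset.card_erase_of_mem hLmem, h3]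
    have hcardle := Finset.card_le_mul_card_image (LS.erase L) 2 hbound
    rw [Finset.card_erase_of_mem hL, hLS] at hcardle
    have himgcard := Finset.card_le_card himg
    omega
  have claim3 : ∀ L ∈ LS, (TS.filter fun P => OnLine P L).card = 3 := by
    intro L hL
    have hrest : 18 ≤ ∑ M ∈ LS.erase L, (TS.filter fun P => OnLine P M).card := by
      have := Finset.card_nsmul_le_sum (LS.erase L)
        (fun M => (TS.filter fun P => OnLine P M).card) 3
        (fun M hM => hlow M (Finset.mem_of_mem_erase hM))
      rw [Finset.card_erase_of_mem hL, hLS] at this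
      simpa using this
    have hsplit := Finset.add_sum_erase LS (fun M => (TS.filter fun P => OnLine P M).card) hL
    beta_reduce at hsplit hrest
    have := hlow L hL
    omega
  -- Claim 4 : any two triple points lie on a common configuration line
  have claim4 : ∀ P Q : ProjPlane F, P ∈ TS → Q ∈ TS → P ≠ Q →
      ∃ L ∈ LS, OnLine P L ∧ OnLine Q L := by
    intro P Q hP hQ hPQ
    set fib : ProjPlane F → Finset (ProjPlane F × ProjPlane F) :=
      fun L => (TS.filter fun S => OnLine S L).offDiag with hfibdef
    have hdis : ∀ L ∈ LS, ∀ M ∈ LS, L ≠ M → Disjoint (fib L) (fib M) := by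
      intro L _ M _ hLM
      rw [Finset.disjoint_left]
      rintro ⟨S1, S2⟩ h1 h2
      rw [hfibdef, Finset.mem_offDiag] at h1 h2
      exact h1.2.2 (point_unique hLM (Finset.mem_filter.mp h1.1).2
        (Finset.mem_filter.mp h2.1).2 (Finset.mem_filter.mp h1.2.1).2
        (Finset.mem_filter.mp h2.2.1).2)
    have hsub : LS.biUnion fib ⊆ TS.offDiag := by
      intro z hz
      rcases Finset.mem_biUnion.mp hz with ⟨L, -, hzL⟩
      rw [hfibdef, Finset.mem_offDiag] at hzL
      exact Finset.mem_offDiag.mpr ⟨(Finset.mem_filter.mp hzL.1).1,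
        (Finset.mem_filter.mp hzL.2.1).1, hzL.2.2⟩
    have hcard : (LS.biUnion fib).card = 42 := by
      rw [Finset.card_biUnion hdis]
      have he : ∀ L ∈ LS, (fib L).card = 6 := by
        intro L hL
        rw [hfibdef, Finset.offDiag_card, claim3 L hL]
      rw [Finset.sum_congr rfl he, Finset.sum_const, hLS]
      norm_num
    have heq : LS.biUnion fib = TS.offDiag :=
      Finset.eq_of_subset_of_card_le hsub
        (by rw [hcard, Finset.offDiag_card, hTS])
    have hz : (P, Q) ∈ TS.offDiag := Finset.mem_offDiag.mpr ⟨hP, hQ, hPQ⟩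
    rw [← heq] at hz
    rcases Finset.mem_biUnion.mp hz with ⟨L, hLm, hLf⟩
    rw [hfibdef, Finset.mem_offDiag] at hLf
    exact ⟨L, hLm, (Finset.mem_filter.mp hLf.1).2, (Finset.mem_filter.mp hLf.2.1).2⟩
  -- extract the seven triple points
  obtain ⟨p1, hp1⟩ := Finset.card_pos.mp (show 0 < TS.card by rw [hTS]; norm_num)
  obtain ⟨L1, L2, L3, hL12, hL13, hL23, hlp1⟩ :=
    Finset.card_eq_three.mp ((hmemTS p1).1 hp1)
  have hL1 : L1 ∈ LS ∧ OnLine p1 L1 := by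
    have : L1 ∈ LS.filter fun L => OnLine p1 L := by rw [hlp1]; simp
    exact Finset.mem_filter.mp this
  have hL2 : L2 ∈ LS ∧ OnLine p1 L2 := by
    have : L2 ∈ LS.filter fun L => OnLine p1 L := by rw [hlp1]; simp
    exact Finset.mem_filter.mp this
  have hL3 : L3 ∈ LS ∧ OnLine p1 L3 := by
    have : L3 ∈ LS.filter fun L => OnLine p1 L := by rw [hlp1]; simp
    exact Finset.mem_filter.mp this
  have hTL : ∀ L : ProjPlane F, L ∈ LS → OnLine p1 L → ∃ a b : ProjPlane F, a ≠ b ∧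
      a ∈ TS ∧ b ∈ TS ∧ a ≠ p1 ∧ b ≠ p1 ∧ OnLine a L ∧ OnLine b L ∧
      (TS.filter fun S => OnLine S L) = {p1, a, b} := by
    intro L hL honL
    have hp1s : p1 ∈ TS.filter fun S => OnLine S L := Finset.mem_filter.mpr ⟨hp1, honL⟩
    have hcard2 : ((TS.filter fun S => OnLine S L).erase p1).card = 2 := by
      rw [Finset.card_erase_of_mem hp1s, claim3 L hL]
    obtain ⟨a, b, hab, habe⟩ := Finset.card_eq_two.mp hcard2
    have ha : a ∈ (TS.filter fun S => OnLine S L).erase p1 := by rw [habe]; simp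
    have hb : b ∈ (TS.filter fun S => OnLine S L).erase p1 := by rw [habe]; simp
    have has := Finset.mem_filter.mp (Finset.mem_of_mem_erase ha)
    have hbs := Finset.mem_filter.mp (Finset.mem_of_mem_erase hb)
    have hset : (TS.filter fun S => OnLine S L) = {p1, a, b} := by
      rw [← Finset.insert_erase hp1s, habe]
    exact ⟨a, b, hab, has.1, hbs.1, (Finset.mem_erase.mp ha).1, (Finset.mem_erase.mp hb).1,
      has.2, hbs.2, hset⟩
  obtain ⟨p2, p3, d23, hp2, hp3, d21, d31, h2L1, h3L1, hTL1⟩ := hTL L1 hL1.1 hL1.2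
  obtain ⟨p4, p5, d45, hp4, hp5, d41, d51, h4L2, h5L2, hTL2⟩ := hTL L2 hL2.1 hL2.2
  obtain ⟨p6, p7, d67, hp6, hp7, d61, d71, h6L3, h7L3, hTL3⟩ := hTL L3 hL3.1 hL3.2
  have dcross : ∀ {a b La Lb : ProjPlane F}, La ≠ Lb → OnLine p1 La → OnLine p1 Lb →
      a ≠ p1 → b ≠ p1 → OnLine a La → OnLine b Lb → a ≠ b := by
    intro a b La Lb hLL h1a h1b hap hbp haL hbL h
    subst h
    exact hLL (line_unique hap.symm h1a haL h1b hbL)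
  have d24 : p2 ≠ p4 := dcross hL12 hL1.2 hL2.2 d21 d41 h2L1 h4L2
  have d25 : p2 ≠ p5 := dcross hL12 hL1.2 hL2.2 d21 d51 h2L1 h5L2
  have d26 : p2 ≠ p6 := dcross hL13 hL1.2 hL3.2 d21 d61 h2L1 h6L3
  have d27 : p2 ≠ p7 := dcross hL13 hL1.2 hL3.2 d21 d71 h2L1 h7L3
  have d34 : p3 ≠ p4 := dcross hL12 hL1.2 hL2.2 d31 d41 h3L1 h4L2
  have d35 : p3 ≠ p5 := dcross hL12 hL1.2 hL2.2 d31 d51 h3L1 h5L2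
  have d36 : p3 ≠ p6 := dcross hL13 hL1.2 hL3.2 d31 d61 h3L1 h6L3
  have d37 : p3 ≠ p7 := dcross hL13 hL1.2 hL3.2 d31 d71 h3L1 h7L3
  have d46 : p4 ≠ p6 := dcross hL23 hL2.2 hL3.2 d41 d61 h4L2 h6L3
  have d47 : p4 ≠ p7 := dcross hL23 hL2.2 hL3.2 d41 d71 h4L2 h7L3
  have d56 : p5 ≠ p6 := dcross hL23 hL2.2 hL3.2 d51 d61 h5L2 h6L3
  have d57 : p5 ≠ p7 := dcross hL23 hL2.2 hL3.2 d51 d71 h5L2 h7L3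
  have d12 : p1 ≠ p2 := d21.symm
  have d13 : p1 ≠ p3 := d31.symm
  have d14 : p1 ≠ p4 := d41.symm
  have d15 : p1 ≠ p5 := d51.symm
  have d16 : p1 ≠ p6 := d61.symm
  have d17 : p1 ≠ p7 := d71.symm
  -- enumeration of the triple points
  have hsubset : ({p1, p2, p3, p4, p5, p6, p7} : Finset (ProjPlane F)) ⊆ TS := by
    intro x hx
    simp only [Finset.mem_insert, Finset.mem_singleton] at hx
    rcases hx with rfl|rfl|rfl|rfl|rfl|rfl|rfl <;> assumption
  have hcard7 : ({p1, p2, p3, p4, p5, p6, p7} : Finset (ProjPlane F)).card = 7 := by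
    rw [Finset.card_insert_of_notMem (by simp [d12, d13, d14, d15, d16, d17]),
      Finset.card_insert_of_notMem (by simp [d23, d24, d25, d26, d27]),
      Finset.card_insert_of_notMem (by simp [d34, d35, d36, d37]),
      Finset.card_insert_of_notMem (by simp [d45, d46, d47]),
      Finset.card_insert_of_notMem (by simp [d56, d57]),
      Finset.card_insert_of_notMem (by simp [d67]),
      Finset.card_singleton]
  have hTSeq : TS = {p1, p2, p3, p4, p5, p6, p7} :=
    (Finset.eq_of_subset_of_card_le hsubset (by rw [hTS, hcard7])).symm
  have henum : ∀ Q ∈ TS, Q = p1 ∨ Q = p2 ∨ Q = p3 ∨ Q = p4 ∨ Q = p5 ∨ Q = p6 ∨ Q = p7 := by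
    intro Q hQ
    rw [hTSeq] at hQ
    simpa using hQ
  -- the "third point" function
  have hnemp : Nonempty (ProjPlane F) := ⟨p1⟩
  have hthd0 : ∀ P Q : ProjPlane F, ∃ R : ProjPlane F, P ∈ TS → Q ∈ TS → P ≠ Q →
      R ∈ TS ∧ R ≠ P ∧ R ≠ Q ∧ ∃ L ∈ LS, OnLine P L ∧ OnLine Q L ∧ OnLine R L ∧
        (TS.filter fun S => OnLine S L) = {P, Q, R} := by
    intro P Q
    by_cases hc : P ∈ TS ∧ Q ∈ TS ∧ P ≠ Q
    · obtain ⟨hP, hQ, hne⟩ := hc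
      obtain ⟨L, hLm, hPL, hQL⟩ := claim4 P Q hP hQ hne
      have hPs : P ∈ TS.filter fun S => OnLine S L := Finset.mem_filter.mpr ⟨hP, hPL⟩
      have hQs : Q ∈ TS.filter fun S => OnLine S L := Finset.mem_filter.mpr ⟨hQ, hQL⟩
      have hQe : Q ∈ (TS.filter fun S => OnLine S L).erase P :=
        Finset.mem_erase.mpr ⟨hne.symm, hQs⟩
      have h1 : (((TS.filter fun S => OnLine S L).erase P).erase Q).card = 1 := by
        rw [Finset.card_erase_of_mem hQe, Finset.card_erase_of_mem hPs, claim3 L hLm]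
      obtain ⟨R, hR⟩ := Finset.card_eq_one.mp h1
      have hRm : R ∈ ((TS.filter fun S => OnLine S L).erase P).erase Q := by rw [hR]; simp
      have hRQ : R ≠ Q := (Finset.mem_erase.mp hRm).1
      have hRP : R ≠ P := (Finset.mem_erase.mp (Finset.mem_of_mem_erase hRm)).1
      have hRs := Finset.mem_filter.mp
        (Finset.mem_of_mem_erase (Finset.mem_of_mem_erase hRm))
      have hseq : (TS.filter fun S => OnLine S L) = {P, Q, R} := by
        rw [← Finset.insert_erase hPs, ← Finset.insert_erase hQe, hR]
      exact ⟨R, fun _ _ _ => ⟨hRs.1, hRP, hRQ, L, hLm, hPL, hQL, hRs.2, hseq⟩⟩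
    · exact ⟨Classical.arbitrary _, fun h1 h2 h3 => absurd ⟨h1, h2, h3⟩ hc⟩
  choose thd hthd using hthd0
  have hmem' : ∀ P Q, P ∈ TS → Q ∈ TS → P ≠ Q →
      thd P Q ∈ TS ∧ thd P Q ≠ P ∧ thd P Q ≠ Q :=
    fun P Q hP hQ h =>
      ⟨(hthd P Q hP hQ h).1, (hthd P Q hP hQ h).2.1, (hthd P Q hP hQ h).2.2.1⟩
  have hthdline : ∀ P Q L', P ∈ TS → Q ∈ TS → P ≠ Q → L' ∈ LS → OnLine P L' → OnLine Q L' →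
      (TS.filter fun S => OnLine S L') = {P, Q, thd P Q} ∧ OnLine (thd P Q) L' := by
    intro P Q L' hP hQ hne hL' hPL' hQL'
    obtain ⟨hRT, hRP, hRQ, L, hLm, hPL, hQL, hRL, hseq⟩ := hthd P Q hP hQ hne
    have hLL : L = L' := line_unique hne hPL hQL hPL' hQL'
    rw [← hLL]
    exact ⟨hseq, hRL⟩
  have hsym : ∀ P Q, P ∈ TS → Q ∈ TS → P ≠ Q → thd P Q = thd Q P := by
    intro P Q hP hQ hne
    obtain ⟨hRT, hRP, hRQ, L, hLm, hPL, hQL, hRL, hseq⟩ := hthd P Q hP hQ hne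
    obtain ⟨hseq', -⟩ := hthdline Q P L hQ hP hne.symm hLm hQL hPL
    have hm : thd Q P ∈ ({P, Q, thd P Q} : Finset (ProjPlane F)) := by
      rw [← hseq, hseq']; simp
    have h1 := (hmem' Q P hQ hP hne.symm).2.1
    have h2 := (hmem' Q P hQ hP hne.symm).2.2
    simp only [Finset.mem_insert, Finset.mem_singleton] at hm
    rcases hm with h|h|h
    · exact absurd h h2
    · exact absurd h h1
    · exact h.symm
  have hinv : ∀ P Q, P ∈ TS → Q ∈ TS → P ≠ Q → thd P (thd P Q) = Q := by
    intro P Q hP hQ hne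
    obtain ⟨hRT, hRP, hRQ, L, hLm, hPL, hQL, hRL, hseq⟩ := hthd P Q hP hQ hne
    obtain ⟨hseq', -⟩ := hthdline P (thd P Q) L hP hRT hRP.symm hLm hPL hRL
    have hm : thd P (thd P Q) ∈ ({P, Q, thd P Q} : Finset (ProjPlane F)) := by
      rw [← hseq, hseq']; simp
    have h1 := (hmem' P (thd P Q) hP hRT hRP.symm).2.1
    have h2 := (hmem' P (thd P Q) hP hRT hRP.symm).2.2
    simp only [Finset.mem_insert, Finset.mem_singleton] at hm
    rcases hm with h|h|h
    · exact absurd h h1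
    · exact h
    · exact absurd h h2
  have hcol : ∀ P Q, P ∈ TS → Q ∈ TS → P ≠ Q →
      ∃ l : Fin 3 → F, l ≠ 0 ∧ P.rep ⬝ᵥ l = 0 ∧ Q.rep ⬝ᵥ l = 0 ∧ (thd P Q).rep ⬝ᵥ l = 0 := by
    intro P Q hP hQ hne
    obtain ⟨-, -, -, L, hLm, hPL, hQL, hRL, -⟩ := hthd P Q hP hQ hne
    exact ⟨L.rep, L.rep_nonzero, hPL, hQL, hRL⟩
  have tfact : ∀ P Q R L, P ∈ TS → Q ∈ TS → P ≠ Q → L ∈ LS → OnLine P L → OnLine Q L →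
      (TS.filter fun S => OnLine S L) = {P, Q, R} → R ≠ P → R ≠ Q → thd P Q = R := by
    intro P Q R L hP hQ hne hLm hPL hQL hfil hRP hRQ
    obtain ⟨hseq', -⟩ := hthdline P Q L hP hQ hne hLm hPL hQL
    have hm : thd P Q ∈ ({P, Q, R} : Finset (ProjPlane F)) := by
      rw [← hfil, hseq']; simp
    have h1 := (hmem' P Q hP hQ hne).2.1
    have h2 := (hmem' P Q hP hQ hne).2.2
    simp only [Finset.mem_insert, Finset.mem_singleton] at hm
    rcases hm with h|h|h
    · exact absurd h h1
    · exact absurd h h2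
    · exact h
  have t12 : thd p1 p2 = p3 :=
    tfact p1 p2 p3 L1 hp1 hp2 d12 hL1.1 hL1.2 h2L1 hTL1 d31 d23.symm
  have t14 : thd p1 p4 = p5 :=
    tfact p1 p4 p5 L2 hp1 hp4 d14 hL2.1 hL2.2 h4L2 hTL2 d51 d45.symm
  have t16 : thd p1 p6 = p7 :=
    tfact p1 p6 p7 L3 hp1 hp6 d16 hL3.1 hL3.2 h6L3 hTL3 d71 d67.symm
  have t17 : thd p1 p7 = p6 := by
    rw [← t16]; exact hinv p1 p6 hp1 hp6 d16
  -- noncollinearity of p1, p2, p4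
  have hncol : ∀ l : Fin 3 → F, l ≠ 0 →
      ¬(p1.rep ⬝ᵥ l = 0 ∧ p2.rep ⬝ᵥ l = 0 ∧ p4.rep ⬝ᵥ l = 0) := by
    rintro l hl ⟨e1, e2, e4⟩
    have o1 : OnLine p1 (Projectivization.mk F l hl) := (onLine_mk_right hl).mpr e1
    have o2 : OnLine p2 (Projectivization.mk F l hl) := (onLine_mk_right hl).mpr e2
    have o4 : OnLine p4 (Projectivization.mk F l hl) := (onLine_mk_right hl).mpr e4
    have hLam : Projectivization.mk F l hl = L1 := line_unique d12 o1 o2 hL1.2 h2L1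
    have h4 : p4 ∈ TS.filter fun S => OnLine S L1 :=
      Finset.mem_filter.mpr ⟨hp4, by rw [← hLam]; exact o4⟩
    rw [hTL1] at h4
    simp only [Finset.mem_insert, Finset.mem_singleton] at h4
    rcases h4 with h|h|h
    · exact d14 h.symm
    · exact d24 h.symm
    · exact d34 h.symm
  -- thd p2 p4 is p6 or p7
  have hr624 : thd p2 p4 = p6 ∨ thd p2 p4 = p7 := by
    obtain ⟨hRT, hRP, hRQ, L, hLm, h2L, h4L, hrL, hfil⟩ := hthd p2 p4 hp2 hp4 d24
    have hmem14 : p4 ∉ ({p1, p2, p3} : Finset (ProjPlane F)) := by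
      simp [d14.symm, d24.symm, d34.symm]
    rcases henum _ hRT with h|h|h|h|h|h|h
    · exfalso
      rw [h] at hrL
      have : L = L1 := line_unique d12 hrL h2L hL1.2 h2L1
      rw [this] at h4L
      exact hmem14 (by rw [← hTL1]; exact Finset.mem_filter.mpr ⟨hp4, h4L⟩)
    · exact absurd h hRP
    · exfalso
      rw [h] at hrL
      have : L = L1 := line_unique d23 h2L hrL h2L1 h3L1
      rw [this] at h4L
      exact hmem14 (by rw [← hTL1]; exact Finset.mem_filter.mpr ⟨hp4, h4L⟩)
    · exact absurd h hRQ
    · exfalso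
      rw [h] at hrL
      have : L = L2 := line_unique d45 h4L hrL h4L2 h5L2
      rw [this] at h2L
      have : p2 ∈ ({p1, p4, p5} : Finset (ProjPlane F)) := by
        rw [← hTL2]; exact Finset.mem_filter.mpr ⟨hp2, h2L⟩
      simp only [Finset.mem_insert, Finset.mem_singleton] at this
      rcases this with h'|h'|h'
      · exact d12 h'.symm
      · exact d24 h'
      · exact d25 h'
    · exact Or.inl h
    · exact Or.inr h
  rcases hr624 with h6 | h7
  · exact fano_tail hchar TS thd hmem' hsym hinv hcol p1 p2 p3 p4 p5 p6 p7
      hp1 hp2 hp3 hp4 hp5 hp6 hp7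
      d12 d13 d14 d15 d16 d17 d23 d24 d25 d26 d27 d34 d35 d36 d37 d45 d46 d47 d56 d57 d67
      henum t12 t14 t16 h6 hncol
  · have henum' : ∀ Q ∈ TS,
        Q = p1 ∨ Q = p2 ∨ Q = p3 ∨ Q = p4 ∨ Q = p5 ∨ Q = p7 ∨ Q = p6 := by
      intro Q hQ
      rcases henum Q hQ with h|h|h|h|h|h|h
      exacts [Or.inl h, Or.inr (Or.inl h), Or.inr (Or.inr (Or.inl h)),
        Or.inr (Or.inr (Or.inr (Or.inl h))),
        Or.inr (Or.inr (Or.inr (Or.inr (Or.inl h)))),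
        Or.inr (Or.inr (Or.inr (Or.inr (Or.inr (Or.inr h))))),
        Or.inr (Or.inr (Or.inr (Or.inr (Or.inr (Or.inl h)))))]
    exact fano_tail hchar TS thd hmem' hsym hinv hcol p1 p2 p3 p4 p5 p7 p6
      hp1 hp2 hp3 hp4 hp5 hp7 hp6
      d12 d13 d14 d15 d17 d16 d23 d24 d25 d27 d26 d34 d35 d37 d36 d45 d47 d46 d57 d56
      d67.symm henum' t12 t14 t17 h7 hncol
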